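/- If f : [2π, 4π] → ℝ is continuous and strictly decreasing, then ∫_{2π}^{4π} f(s) sin(2s) ds > 0. -/

import Mathlib

open Real MeasureTheory intervalIntegral

/-- **A strictly decreasing resistance drift profile produces an inductive loop:**
if `f : [2π, 4π] → ℝ` is continuous and strictly decreasing, then
`∫_{2π}^{4π} f(s) sin(2s) ds > 0`. -/
theorem inductive_loop_of_strictAnti
    (f : ℝ → ℝ)
    (hf : ContinuousOn f (Set.Icc (2 * π) (4 * π)))
    (hanti : StrictAntiOn f (Set.Icc (2 * π) (4 * π))) :
    0 < ∫ s in (2 * π)..(4 * π), f s * Real.sin (2 * s) := by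
  have hπ : (0:ℝ) < π := Real.pi_pos
  set F : ℝ → ℝ := fun s => f s * Real.sin (2 * s) with hFdef
  have hsin : Continuous fun x : ℝ => Real.sin (2 * x) :=
    Real.continuous_sin.comp (continuous_const.mul continuous_id)
  have hFc : ContinuousOn F (Set.Icc (2*π) (4*π)) := hf.mul hsin.continuousOn
  have hsub : ∀ a b : ℝ, 2*π ≤ a → a ≤ b → b ≤ 4*π → IntervalIntegrable F volume a b := by
    intro a b ha hab hb
    apply (hFc.mono ?_).intervalIntegrable
    rw [Set.uIcc_of_le hab]
    exact Set.Icc_subset_Icc ha hb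
  have h01 : IntervalIntegrable F volume (2*π) (2*π + π/2) :=
    hsub _ _ le_rfl (by linarith) (by linarith)
  have h12 : IntervalIntegrable F volume (2*π + π/2) (3*π) :=
    hsub _ _ (by linarith) (by linarith) (by linarith)
  have h23 : IntervalIntegrable F volume (3*π) (3*π + π/2) :=
    hsub _ _ (by linarith) (by linarith) (by linarith)
  have h34 : IntervalIntegrable F volume (3*π + π/2) (4*π) :=
    hsub _ _ (by linarith) (by linarith) (by linarith)
  have e1 : (∫ s in (2*π)..(2*π+π/2), F s) + (∫ s in (2*π+π/2)..(3*π), F s)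
      = ∫ s in (2*π)..(3*π), F s := integral_add_adjacent_intervals h01 h12
  have e2 : (∫ s in (3*π)..(3*π+π/2), F s) + (∫ s in (3*π+π/2)..(4*π), F s)
      = ∫ s in (3*π)..(4*π), F s := integral_add_adjacent_intervals h23 h34
  have e3 : (∫ s in (2*π)..(3*π), F s) + (∫ s in (3*π)..(4*π), F s)
      = ∫ s in (2*π)..(4*π), F s :=
    integral_add_adjacent_intervals (h01.trans h12) (h23.trans h34)
  have shift : ∀ c : ℝ, (∫ x in (0:ℝ)..(π/2), F (x + c)) = ∫ s in c..(c + π/2), F s := by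
    intro c
    rw [intervalIntegral.integral_comp_add_right, zero_add, add_comm (π/2) c]
  have s1 : (∫ s in (2*π)..(2*π+π/2), F s) = ∫ x in (0:ℝ)..(π/2), F (x + 2*π) :=
    (shift (2*π)).symm
  have s2 : (∫ s in (2*π+π/2)..(3*π), F s) = ∫ x in (0:ℝ)..(π/2), F (x + (2*π + π/2)) := by
    rw [show (3*π:ℝ) = (2*π+π/2) + π/2 by ring]; exact (shift _).symm
  have s3 : (∫ s in (3*π)..(3*π+π/2), F s) = ∫ x in (0:ℝ)..(π/2), F (x + 3*π) :=
    (shift (3*π)).symm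
  have s4 : (∫ s in (3*π+π/2)..(4*π), F s) = ∫ x in (0:ℝ)..(π/2), F (x + (3*π + π/2)) := by
    rw [show (4*π:ℝ) = (3*π+π/2) + π/2 by ring]; exact (shift _).symm
  -- sin identities
  have sin4 : ∀ x : ℝ, Real.sin (2*(x + 2*π)) = Real.sin (2*x) := by
    intro x
    rw [show 2*(x + 2*π) = (2*x + 2*π) + 2*π by ring, Real.sin_add_two_pi, Real.sin_add_two_pi]
  have sin5 : ∀ x : ℝ, Real.sin (2*(x + (2*π + π/2))) = -Real.sin (2*x) := by
    intro x
    rw [show 2*(x + (2*π + π/2)) = ((2*x + π) + 2*π) + 2*π by ring, Real.sin_add_two_pi,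
      Real.sin_add_two_pi, Real.sin_add_pi]
  have sin6 : ∀ x : ℝ, Real.sin (2*(x + 3*π)) = Real.sin (2*x) := by
    intro x
    rw [show 2*(x + 3*π) = ((2*x + 2*π) + 2*π) + 2*π by ring, Real.sin_add_two_pi,
      Real.sin_add_two_pi, Real.sin_add_two_pi]
  have sin7 : ∀ x : ℝ, Real.sin (2*(x + (3*π + π/2))) = -Real.sin (2*x) := by
    intro x
    rw [show 2*(x + (3*π + π/2)) = (((2*x + π) + 2*π) + 2*π) + 2*π by ring,
      Real.sin_add_two_pi, Real.sin_add_two_pi, Real.sin_add_two_pi, Real.sin_add_pi]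
  have r1 : (fun x => F (x + 2*π)) = fun x => f (x + 2*π) * Real.sin (2*x) := by
    funext x; simp only [hFdef]; rw [sin4]
  have r2 : (fun x => F (x + (2*π + π/2))) = fun x => -(f (x + (2*π + π/2)) * Real.sin (2*x)) := by
    funext x; simp only [hFdef]; rw [sin5]; ring
  have r3 : (fun x => F (x + 3*π)) = fun x => f (x + 3*π) * Real.sin (2*x) := by
    funext x; simp only [hFdef]; rw [sin6]
  have r4 : (fun x => F (x + (3*π + π/2))) = fun x => -(f (x + (3*π + π/2)) * Real.sin (2*x)) := by
    funext x; simp only [hFdef]; rw [sin7]; ring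
  -- continuity / integrability of shifted pieces on [0, π/2]
  have hfc : ∀ c : ℝ, 2*π ≤ c → c + π/2 ≤ 4*π →
      ContinuousOn (fun x => f (x + c)) (Set.Icc (0:ℝ) (π/2)) := by
    intro c hc1 hc2
    apply hf.comp ((continuous_id.add continuous_const).continuousOn)
    intro x hx
    simp only [Set.mem_Icc, id_eq, Pi.add_apply] at hx ⊢
    exact ⟨by linarith [hx.1], by linarith [hx.2]⟩
  have hmem : ∀ c : ℝ, 2*π ≤ c → c + π/2 ≤ 4*π →
      IntervalIntegrable (fun x => f (x + c) * Real.sin (2*x)) volume 0 (π/2) := by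
    intro c hc1 hc2
    apply ContinuousOn.intervalIntegrable
    rw [Set.uIcc_of_le (by linarith)]
    exact (hfc c hc1 hc2).mul hsin.continuousOn
  have i1 := hmem (2*π) le_rfl (by linarith)
  have i2 := hmem (2*π + π/2) (by linarith) (by linarith)
  have i3 := hmem (3*π) (by linarith) (by linarith)
  have i4 := hmem (3*π + π/2) (by linarith) (by linarith)
  have key : (∫ s in (2*π)..(4*π), F s)
      = ∫ x in (0:ℝ)..(π/2),
          ((f (x + 2*π) - f (x + (2*π + π/2)) + f (x + 3*π) - f (x + (3*π + π/2)))
            * Real.sin (2*x)) := by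
    have hr : (∫ x in (0:ℝ)..(π/2),
          ((f (x + 2*π) - f (x + (2*π + π/2)) + f (x + 3*π) - f (x + (3*π + π/2)))
            * Real.sin (2*x)))
        = ((∫ x in (0:ℝ)..(π/2), f (x + 2*π) * Real.sin (2*x))
            + (∫ x in (0:ℝ)..(π/2), f (x + 3*π) * Real.sin (2*x)))
          - ((∫ x in (0:ℝ)..(π/2), f (x + (2*π + π/2)) * Real.sin (2*x))
            + (∫ x in (0:ℝ)..(π/2), f (x + (3*π + π/2)) * Real.sin (2*x))) := by
      rw [← intervalIntegral.integral_add i1 i3, ← intervalIntegral.integral_add i2 i4,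
        ← intervalIntegral.integral_sub (i1.add i3) (i2.add i4)]
      apply intervalIntegral.integral_congr
      intro x _
      ring
    rw [← e3, ← e1, ← e2, s1, s2, s3, s4, r1, r2, r3, r4, hr]
    simp only [intervalIntegral.integral_neg]
    ring
  rw [key]
  apply intervalIntegral.intervalIntegral_pos_of_pos_on
  · apply ContinuousOn.intervalIntegrable
    rw [Set.uIcc_of_le (by linarith : (0:ℝ) ≤ π/2)]
    exact ((((hfc (2*π) le_rfl (by linarith)).sub
      (hfc (2*π + π/2) (by linarith) (by linarith))).add
      (hfc (3*π) (by linarith) (by linarith))).sub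
      (hfc (3*π + π/2) (by linarith) (by linarith))).mul hsin.continuousOn
  · intro x hx
    obtain ⟨hx1, hx2⟩ := hx
    have hsinpos : 0 < Real.sin (2*x) :=
      Real.sin_pos_of_pos_of_lt_pi (by linarith) (by linarith)
    have m1 : x + 2*π ∈ Set.Icc (2*π) (4*π) := ⟨by linarith, by linarith⟩
    have m2 : x + (2*π + π/2) ∈ Set.Icc (2*π) (4*π) := ⟨by linarith, by linarith⟩
    have m3 : x + 3*π ∈ Set.Icc (2*π) (4*π) := ⟨by linarith, by linarith⟩
    have m4 : x + (3*π + π/2) ∈ Set.Icc (2*π) (4*π) := ⟨by linarith, by linarith⟩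
    have d1 : f (x + (2*π + π/2)) < f (x + 2*π) := hanti m1 m2 (by linarith)
    have d2 : f (x + (3*π + π/2)) < f (x + 3*π) := hanti m3 m4 (by linarith)
    have : 0 < f (x + 2*π) - f (x + (2*π + π/2)) + f (x + 3*π) - f (x + (3*π + π/2)) := by
      linarith
    exact mul_pos this hsinpos
  · linarith
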